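/- The packing chromatic number of the distance graph D(2,5) is at least 14. -/

import Mathlib

/-- The infinite distance graph `D(k,t)` on vertex set `ℤ`: distinct `i, j` are
adjacent iff `|i - j| ∈ {k, t}`. -/
def distGraph (k t : ℕ) : SimpleGraph ℤ where
  Adj i j := i ≠ j ∧ ((i - j).natAbs = k ∨ (i - j).natAbs = t)
  symm := by
    constructor
    rintro i j ⟨hne, hd⟩
    refine ⟨hne.symm, ?_⟩
    rwa [show j - i = -(i - j) by ring, Int.natAbs_neg]
  loopless := by constructor; rintro i ⟨hne, -⟩; exact hne rfl

/-- `c` is a packing `p`-coloring of `G`: each vertex gets a color in `{1, …, p}`,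
and any two distinct vertices with the same color `c` are at distance greater
than `c` (in particular, unreachable pairs have infinite distance). -/
def IsPackingColoring {V : Type*} (G : SimpleGraph V) (p : ℕ) (c : V → ℕ) : Prop :=
  (∀ v, 1 ≤ c v ∧ c v ≤ p) ∧
  ∀ u v : V, u ≠ v → c u = c v → (c u : ℕ∞) < G.edist u v

/-- The packing chromatic number of `G`: the smallest `p` (as an element of `ℕ∞`,
being `⊤` if no finite packing coloring exists) admitting a packing `p`-coloring. -/
noncomputable def packingChromaticNumber {V : Type*} (G : SimpleGraph V) : ℕ∞ :=
  sInf {q : ℕ∞ | ∃ p : ℕ, q = p ∧ ∃ c : V → ℕ, IsPackingColoring G p c}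

set_option linter.unnecessarySeqFocus false

namespace D25

lemma adj_of {u v : ℤ} (h : (u - v).natAbs = 2 ∨ (u - v).natAbs = 5) :
    (distGraph 2 5).Adj u v := by
  refine ⟨?_, h⟩
  intro he
  rw [he] at h
  simp at h

lemma edist_le_one_of_adj {u v : ℤ} (h : (distGraph 2 5).Adj u v) :
    (distGraph 2 5).edist u v ≤ 1 := by
  have := SimpleGraph.edist_le (SimpleGraph.Walk.cons h SimpleGraph.Walk.nil)
  simpa using this

lemma edist_le_steps : ∀ (n : ℕ) (u x y : ℤ), x.natAbs + y.natAbs ≤ n →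
    (distGraph 2 5).edist u (u + 5*x + 2*y) ≤ (n : ℕ∞) := by
  intro n
  induction n with
  | zero =>
    intro u x y h
    have hx : x = 0 := by omega
    have hy : y = 0 := by omega
    subst hx; subst hy
    simp
  | succ n ih =>
    intro u x y h
    by_cases hx0 : x = 0
    · by_cases hy0 : y = 0
      · subst hx0; subst hy0; simp
      · -- step of ±2
        set s : ℤ := if 0 < y then 2 else -2 with hs
        set y' : ℤ := if 0 < y then y - 1 else y + 1 with hy'
        have hadj : (distGraph 2 5).Adj u (u + s) := by
          apply adj_of
          left
          simp only [hs]
          split <;> omega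
        have h2 : (distGraph 2 5).edist (u + s) ((u + s) + 5*x + 2*y') ≤ (n : ℕ∞) := by
          apply ih
          simp only [hy']
          split <;> omega
        have heq : u + 5*x + 2*y = (u + s) + 5*x + 2*y' := by
          simp only [hs, hy']
          split <;> ring
        rw [heq]
        calc (distGraph 2 5).edist u ((u + s) + 5*x + 2*y')
            ≤ (distGraph 2 5).edist u (u + s) +
              (distGraph 2 5).edist (u + s) ((u + s) + 5*x + 2*y') :=
              SimpleGraph.edist_triangle
          _ ≤ 1 + (n : ℕ∞) := add_le_add (edist_le_one_of_adj hadj) h2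
          _ = ((n + 1 : ℕ) : ℕ∞) := by
              push_cast
              rw [add_comm]
    · -- step of ±5
      set s : ℤ := if 0 < x then 5 else -5 with hs
      set x' : ℤ := if 0 < x then x - 1 else x + 1 with hx'
      have hadj : (distGraph 2 5).Adj u (u + s) := by
        apply adj_of
        right
        simp only [hs]
        split <;> omega
      have h2 : (distGraph 2 5).edist (u + s) ((u + s) + 5*x' + 2*y) ≤ (n : ℕ∞) := by
        apply ih
        simp only [hx']
        split <;> omega
      have heq : u + 5*x + 2*y = (u + s) + 5*x' + 2*y := by
        simp only [hs, hx']
        split <;> ring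
      rw [heq]
      calc (distGraph 2 5).edist u ((u + s) + 5*x' + 2*y)
          ≤ (distGraph 2 5).edist u (u + s) +
            (distGraph 2 5).edist (u + s) ((u + s) + 5*x' + 2*y) :=
            SimpleGraph.edist_triangle
        _ ≤ 1 + (n : ℕ∞) := add_le_add (edist_le_one_of_adj hadj) h2
        _ = ((n + 1 : ℕ) : ℕ∞) := by
            push_cast
            rw [add_comm]

lemma edist_le_of_eq {u v : ℤ} {x y : ℤ} (hxy : v = u + 5*x + 2*y) {n : ℕ}
    (hn : x.natAbs + y.natAbs ≤ n) : (distGraph 2 5).edist u v ≤ (n : ℕ∞) := by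
  rw [hxy]; exact edist_le_steps n u x y hn

end D25
namespace D25

lemma decomp10 (d : ℤ) (h1 : 1 ≤ d.natAbs) (h2 : d.natAbs ≤ 10) :
    ∃ x y : ℤ, d = 5*x + 2*y ∧ x.natAbs + y.natAbs ≤ 3 := by
  have hb : -10 ≤ d ∧ d ≤ 10 := by omega
  obtain ⟨hb1, hb2⟩ := hb
  interval_cases d
  · exact ⟨-2, 0, by norm_num, by norm_num⟩
  · exact ⟨-1, -2, by norm_num, by norm_num⟩
  · exact ⟨-2, 1, by norm_num, by norm_num⟩
  · exact ⟨-1, -1, by norm_num, by norm_num⟩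
  · exact ⟨0, -3, by norm_num, by norm_num⟩
  · exact ⟨-1, 0, by norm_num, by norm_num⟩
  · exact ⟨0, -2, by norm_num, by norm_num⟩
  · exact ⟨-1, 1, by norm_num, by norm_num⟩
  · exact ⟨0, -1, by norm_num, by norm_num⟩
  · exact ⟨-1, 2, by norm_num, by norm_num⟩
  · omega
  · exact ⟨1, -2, by norm_num, by norm_num⟩
  · exact ⟨0, 1, by norm_num, by norm_num⟩
  · exact ⟨1, -1, by norm_num, by norm_num⟩
  · exact ⟨0, 2, by norm_num, by norm_num⟩
  · exact ⟨1, 0, by norm_num, by norm_num⟩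
  · exact ⟨0, 3, by norm_num, by norm_num⟩
  · exact ⟨1, 1, by norm_num, by norm_num⟩
  · exact ⟨2, -1, by norm_num, by norm_num⟩
  · exact ⟨1, 2, by norm_num, by norm_num⟩
  · exact ⟨2, 0, by norm_num, by norm_num⟩
lemma decompK : ∀ (k : ℕ), 3 ≤ k → ∀ d : ℤ, 1 ≤ d.natAbs → d.natAbs ≤ 5*k - 5 →
    ∃ x y : ℤ, d = 5*x + 2*y ∧ x.natAbs + y.natAbs ≤ k := by
  intro k
  induction k with
  | zero => omega
  | succ k ih =>
    intro hk d h1 h2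
    by_cases hk3 : k < 3
    · obtain ⟨x, y, hxy, hb⟩ := decomp10 d h1 (by omega)
      exact ⟨x, y, hxy, by omega⟩
    · by_cases hd : d.natAbs ≤ 5*k - 5
      · obtain ⟨x, y, hxy, hb⟩ := ih (by omega) d h1 hd
        exact ⟨x, y, hxy, by omega⟩
      · by_cases hpos : 0 < d
        · obtain ⟨x, y, hxy, hb⟩ := ih (by omega) (d - 5) (by omega) (by omega)
          exact ⟨x + 1, y, by linarith, by omega⟩
        · obtain ⟨x, y, hxy, hb⟩ := ih (by omega) (d + 5) (by omega) (by omega)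
          exact ⟨x - 1, y, by linarith, by omega⟩

lemma edist_le_k {k : ℕ} (hk : 3 ≤ k) {u v : ℤ} (h1 : u ≠ v)
    (h2 : (v - u).natAbs ≤ 5*k - 5) : (distGraph 2 5).edist u v ≤ (k : ℕ∞) := by
  have hne : v - u ≠ 0 := sub_ne_zero.mpr (Ne.symm h1)
  obtain ⟨x, y, hxy, hb⟩ := decompK k hk (v - u) (by omega) h2
  exact edist_le_of_eq (by linarith) hb

lemma edist_le_two {u v : ℤ}
    (h : (v - u).natAbs = 2 ∨ (v - u).natAbs = 3 ∨ (v - u).natAbs = 4 ∨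
         (v - u).natAbs = 5 ∨ (v - u).natAbs = 7 ∨ (v - u).natAbs = 10) :
    (distGraph 2 5).edist u v ≤ (2 : ℕ∞) := by
  have h' : v - u = 2 ∨ v - u = -2 ∨ v - u = 3 ∨ v - u = -3 ∨ v - u = 4 ∨ v - u = -4 ∨
      v - u = 5 ∨ v - u = -5 ∨ v - u = 7 ∨ v - u = -7 ∨ v - u = 10 ∨ v - u = -10 := by omega
  rcases h' with h'|h'|h'|h'|h'|h'|h'|h'|h'|h'|h'|h'
  · exact edist_le_of_eq (x := 0) (y := 1) (by linarith) (by norm_num)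
  · exact edist_le_of_eq (x := 0) (y := -1) (by linarith) (by norm_num)
  · exact edist_le_of_eq (x := 1) (y := -1) (by linarith) (by norm_num)
  · exact edist_le_of_eq (x := -1) (y := 1) (by linarith) (by norm_num)
  · exact edist_le_of_eq (x := 0) (y := 2) (by linarith) (by norm_num)
  · exact edist_le_of_eq (x := 0) (y := -2) (by linarith) (by norm_num)
  · exact edist_le_of_eq (x := 1) (y := 0) (by linarith) (by norm_num)
  · exact edist_le_of_eq (x := -1) (y := 0) (by linarith) (by norm_num)
  · exact edist_le_of_eq (x := 1) (y := 1) (by linarith) (by norm_num)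
  · exact edist_le_of_eq (x := -1) (y := -1) (by linarith) (by norm_num)
  · exact edist_le_of_eq (x := 2) (y := 0) (by linarith) (by norm_num)
  · exact edist_le_of_eq (x := -2) (y := 0) (by linarith) (by norm_num)

end D25
namespace D25

variable {p : ℕ} {c : ℤ → ℕ}

lemma not_same_1 (hp : IsPackingColoring (distGraph 2 5) p c) {u v : ℤ} (hne : u ≠ v)
    (h1 : c u = 1) (h2 : c v = 1)
    (hd : (v - u).natAbs = 2 ∨ (v - u).natAbs = 5) : False := by
  have hlt := hp.2 u v hne (by rw [h1, h2])
  rw [h1] at hlt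
  have hle : (distGraph 2 5).edist u v ≤ 1 := by
    apply edist_le_one_of_adj
    exact ((adj_of hd).symm)
  have : ((1 : ℕ) : ℕ∞) < 1 := lt_of_lt_of_le hlt hle
  simp at this

lemma not_same_2 (hp : IsPackingColoring (distGraph 2 5) p c) {u v : ℤ} (hne : u ≠ v)
    (h1 : c u = 2) (h2 : c v = 2)
    (hd : (v - u).natAbs = 2 ∨ (v - u).natAbs = 3 ∨ (v - u).natAbs = 4 ∨
          (v - u).natAbs = 5 ∨ (v - u).natAbs = 7 ∨ (v - u).natAbs = 10) : False := by
  have hlt := hp.2 u v hne (by rw [h1, h2])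
  rw [h1] at hlt
  have hle := edist_le_two (u := u) (v := v) hd
  have : ((2 : ℕ) : ℕ∞) < 2 := lt_of_lt_of_le hlt hle
  simp at this

lemma gap_k (hp : IsPackingColoring (distGraph 2 5) p c) {k : ℕ} (hk : 3 ≤ k) {u v : ℤ}
    (hne : u ≠ v) (h1 : c u = k) (h2 : c v = k) : 5*k - 4 ≤ (v - u).natAbs := by
  by_contra hcon
  have hle : (distGraph 2 5).edist u v ≤ (k : ℕ∞) := edist_le_k hk hne (by omega)
  have hlt := hp.2 u v hne (by rw [h1, h2])
  rw [h1] at hlt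
  have : (k : ℕ∞) < (k : ℕ∞) := lt_of_lt_of_le hlt hle
  simp at this

end D25
namespace D25

def chunk (i : ℕ) : ℕ :=
  (cond (Nat.ble i 7) (cond (Nat.ble i 3) (cond (Nat.ble i 1) (cond (Nat.ble i 0) 0x300600300000020000300600300300300300000000070300300a303006003000000400003008103003006003000000000003006003003003003000000000003003005003006003000000000003008103003006003000000200003006003003003003000000000203003005003006003000000200003006003003006003000000b0070300840500300300300000000020300300500300600300000060020300600300300fb0840000000000300a40300f8030081600300300aa33303300a60a60306006003006606603300300c60520000060020300600300c5030070c05300700660330330092094030902904300660660330 0x300600300000020000300600300300300300000000000300300300300600300000020000300600300300600300000000000300600300300300300000000000300300a30300600300000000000300d6060030060030000002000030060030030030030000000000030030030030060030000004000030060030030060030000002000030060030030030030000000000030030030030060030000002000030060030030060030000000000030060030030030030300300300330330550030060030300600300330881330030060030000002000030060030030030030300300500330330330030060030300b04400330660330) (cond (Nat.ble i 2) 0x30060030000002000030060030030030030000000000030030030030060030000002000030060030030060030000000000030060030030030030000000000030030030030060030000000000030060030030060030000002000030060030030030030000000000030030030030060030000002000030060030030060030000002000030060030030030030000000000030030030030060030000002000030060030030060030000000000030060030060030030000000000081030030060060030000000000061061030030060030000002000030060030060030030007000000070030030060060030004004000060060030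 0x30060030000002000030060030030030030000000000030030030030060030000002000030060030030060030000000000030060030030030030000000000030030030030060030000000000030060030030060030000002000030060030030030030000000000030030030030060030000002000030060030030060030000002000030060030030030030000000000030030030030060030000002000030060030030060030000000000030060030030030030000000000030030030030060030000000000030066030030060030000002000030060030030030030000000000030030030030060030000009002030062030)) (cond (Nat.ble i 5) (cond (Nat.ble i 4) 0x300600300000020000300600300300300300000000000300300300300600300000020000300600300300600300000000000300600300300300300000000000300300300300600300000000000300600300300600300000020000300600300300300300000000000300300300300600300000020000300600300300600300000020000300600300300300300000000000300300300300600300000020000300600300300920300000000000300600300300300a33003003003303303300300a4030300600300330660330030092030000002000030060030030030070300300700330330330030092030300902400330660330 0x30060030000002000030060030030030030000000000030030030030060030000002000030060030030060030000000000030060030030030030000000000030030030030060030000000000030060030030060030000002000030060030030030030000000000030030030030060030000002000030060030030060030000002000030060030030030030000000000030030030030060030000002000030060030030060030000000000030060030030030030300300300330330330030060030300600300330660330030060030000002000030060030030030030300300500330330330030060030300902300330660330) (cond (Nat.ble i 6) 0x30060030000002000030060030030030030000000000030030030030060030000002000030060030030060030000000000030060030030030030000000000030030030030060030000000000030060030030060030000002000030060030030030030000000000030030030030060030000002000030060030030060030000002000030060030030030030000000000030030030030060030000002000030060030030060030000000000030060030030030030000000000030030030030060030000000000030060030030060030000002000030060030030030030000000005030030050030060030000002002030060030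 0x30060030000002000030060030030030030000000000030030030030060030000002000030060030030060030000000000030060030030030030000000000030030030030060030000000000030060030030060030000002000030060030030030030000000000030030030030060030000002000030060030030060030000002000030060030030030030000000000030030030030060030000002000030060030030060030000000000030060030030030030000000000030030030030060030000000000030060030030060030000002000030060030030030030000000000030030030030060030000002000030060030))) (cond (Nat.ble i 11) (cond (Nat.ble i 9) (cond (Nat.ble i 8) 0x300600300000020000300600300300300300000000000300300300300600300000020000300600300300600300000000000300600300300300300000000000300300300300600300000000000300600300300600300000020000300600300300300300000000000300300300300600300000020000300600300300600300000050000300600300300300300000000000300300300300600300000020000300600300300600300000000000300a6030060030030600300300aa3330330060060030600600300684684330030060030000006000030060030060030030c05300500770330330060060030904904300660660330 0x30060030000002000030060030030030030000000000030030030030060030000002000030060030030060030000000000030060030030030030000000000030030030030060030000000000030060030030060030000002000030060030030030030000000000030030030030060030000002000030060030030060030000002000030060030030030030000000000030030030030060030000002000030060030030060030000000000030060030030030030300300300330330330030060030300600300330660330030060030000002000030060030030030030300300500330330330030060030300902300330660330) (cond (Nat.ble i 10) 0x30060030000002000030060030030030030000000000030030030030060030000002000030060030030060030000000000030060030030030030000000000030030030030060030000000000030060030030060030000002000030060030030030030000000000030030030030060030000002000030060030030060030000002000030060030030030030000000000030030030030060030000002000030060030030060030000000000030060030060030030000000000081030030060060030000000000060060030030060030000002000030060030060030030005000000060030030060060030002002000060060030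 0x30060030000002000030060030030030030000000000030030030030060030000002000030060030030060030000000000030060030030030030000000000030030030030060030000000000030060030030060030000002000030060030030030030000000000030030030030060030000002000030060030030060030000002000030060030030030030000000000030030030030060030000002000030060030030060030000000000030060030030030030000000000030030030030060030000000000030060030030060030000002000030060030030030030000000000030030030030060030000002000030060030)) (cond (Nat.ble i 13) (cond (Nat.ble i 12) 0x30060030000002000030060030030030030000000000030030030030060030000002000030060030030060030000000000030060030030030030000000000030030030030060030000000000030060030030060030000002000030060030030030030000000000030030030030060030000002000030060030030060030000002000030060030030030030000000000030030030030060030000002000030060030030060030000000000030060030030030030300300300330330881030060030300600300330881330030060030000002000030060030030030030300300500330330550030060030300902300330660330 0x30060030000002000030060030030030030000000000030030030030060030000002000030060030030060030000000000030060030030030030000000000030030030030060030000000000030060030030060030000002000030060030030030030000000000030030030030060030000002000030060030030060030000002000030060030030030030000000000030030030030060030000002000030060030030060030000000000030060030030030030300300300330330330030060030300600300330660330030060030000002000030060030030030030300300500330330330030060030300902300330660330) (cond (Nat.ble i 14) 0x30060030000002000030060030030030030000000000030030030030060030000002000030060030030060030000000000030060030030030030000000000030030030030060030000000000030060030030060030000002000030060030030030030000000000030030030030060030000002000030060030030060030000002000030060030030030030000000000030030030030060030000002000030060030030060030000000000030060030030030030000000000030030030030060030000000000030060030030060030000002000030060030030030030000000000030030030030060030000002000030060030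 0x30060030000002000030060030030030030000000000030030030030060030000002000030060030030060030000000000030060030030030030000000000030030030030060030000000000030060030030060030000002000030060030030030030000000000030030030030060030000002000030060030030060030000002000030060030030030030000000000030030030030060030000002000030060030030060030000000000030060030030030030000000000030030030030060030000000000030060030030060030000002000030060030030030030000000000030030030030060030000002000030060030))))

def phi (k : ℕ) : ℕ := (Nat.shiftRight (chunk (k / 486)) (4 * (k % 486))) % 16

def shf (b k : ℕ) : ℕ :=
  b + 3 * (k % 81) + 243 * ((cond (k / 81 % 3 == 2) 1 0) + 2 * (k / 243 % 16))

def ok1b (k : ℕ) : Bool := !(k / 3 % 3 == 1) && !(k / 81 % 3 == 1)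

def ok2b (k : ℕ) : Bool :=
  !(k / 3 % 3 == 2) && !(k / 9 % 3 == 2) && !(k / 27 % 3 == 2) &&
  !(k / 81 % 3 == 2) && !(k / 486 % 2 == 1) && !(k / 3888 % 2 == 1)

def check1 (k : ℕ) : Bool :=
  Nat.ble (phi k) 15 &&
  Nat.ble (phi k) (4 + phi (shf 0 k)) &&
  (!(ok1b k) || Nat.ble (7 + phi k) (4 + phi (shf 1 k))) &&
  (!(ok2b k) || Nat.ble (7 + phi k) (4 + phi (shf 2 k)))

def checkRange (lo : ℕ) : ℕ → Bool
  | 0 => true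
  | n+1 => check1 (lo + n) && checkRange lo n

def checkTree (lo : ℕ) : ℕ → ℕ → Bool
  | 0, n => checkRange lo n
  | f+1, n => checkTree lo f (n / 2) && checkTree (lo + n / 2) f (n - n / 2)

set_option maxHeartbeats 10000000 in
set_option maxRecDepth 100000 in
theorem certAll : checkTree 0 6 7776 = true := by decide

lemma checkRange_spec : ∀ (n lo : ℕ), checkRange lo n = true →
    ∀ i, i < n → check1 (lo + i) = true := by
  intro n
  induction n with
  | zero => intro lo _ i hi; omega
  | succ n ih =>
    intro lo h i hi
    rw [checkRange, Bool.and_eq_true] at h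
    by_cases hin : i = n
    · subst hin; exact h.1
    · exact ih lo h.2 i (by omega)

lemma checkTree_spec : ∀ (f lo n : ℕ), checkTree lo f n = true →
    ∀ i, i < n → check1 (lo + i) = true := by
  intro f
  induction f with
  | zero => intro lo n h i hi; exact checkRange_spec n lo h i hi
  | succ f ih =>
    intro lo n h i hi
    rw [checkTree, Bool.and_eq_true] at h
    by_cases hlow : i < n / 2
    · exact ih lo (n / 2) h.1 i hlow
    · have := ih (lo + n / 2) (n - n / 2) h.2 (i - n / 2) (by omega)
      rwa [show lo + n / 2 + (i - n / 2) = lo + i by omega] at this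

lemma check1_true : ∀ k, k < 7776 → check1 k = true := by
  intro k hk
  have := checkTree_spec 6 0 7776 certAll k hk
  rwa [Nat.zero_add] at this

end D25
namespace D25

def enc1 (m : ℕ) : ℕ := if m = 1 then 1 else if m = 2 then 2 else 0
def enc2 (m : ℕ) : ℕ := if m = 2 then 1 else 0

lemma enc1_lt (m : ℕ) : enc1 m < 3 := by unfold enc1; split_ifs <;> norm_num
lemma enc2_lt (m : ℕ) : enc2 m < 2 := by unfold enc2; split_ifs <;> norm_num
lemma enc1_eq_one {m : ℕ} (h : enc1 m = 1) : m = 1 := by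
  unfold enc1 at h; split_ifs at h with h1 h2 <;> omega
lemma enc1_eq_two {m : ℕ} (h : enc1 m = 2) : m = 2 := by
  unfold enc1 at h; split_ifs at h with h1 h2 <;> omega
lemma enc2_eq_one {m : ℕ} (h : enc2 m = 1) : m = 2 := by
  unfold enc2 at h; split_ifs at h with h1 <;> omega
lemma cond_enc1 (m : ℕ) : (cond (enc1 m == 2) 1 0 : ℕ) = enc2 m := by
  unfold enc1 enc2
  split_ifs <;> first | rfl | omega

def stKey (c : ℤ → ℕ) (z : ℤ) : ℕ :=
  enc1 (c (z-1)) + 3 * enc1 (c (z-2)) + 9 * enc1 (c (z-3)) + 27 * enc1 (c (z-4)) +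
  81 * enc1 (c (z-5)) + 243 * enc2 (c (z-6)) + 486 * enc2 (c (z-7)) +
  972 * enc2 (c (z-8)) + 1944 * enc2 (c (z-9)) + 3888 * enc2 (c (z-10))

lemma stKey_digits (c : ℤ → ℕ) (z : ℤ) :
    stKey c z < 7776 ∧
    stKey c z / 3 % 3 = enc1 (c (z-2)) ∧
    stKey c z / 9 % 3 = enc1 (c (z-3)) ∧
    stKey c z / 27 % 3 = enc1 (c (z-4)) ∧
    stKey c z / 81 % 3 = enc1 (c (z-5)) ∧
    stKey c z / 486 % 2 = enc2 (c (z-7)) ∧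
    stKey c z / 3888 % 2 = enc2 (c (z-10)) := by
  have b1 := enc1_lt (c (z-1)); have b2 := enc1_lt (c (z-2)); have b3 := enc1_lt (c (z-3))
  have b4 := enc1_lt (c (z-4)); have b5 := enc1_lt (c (z-5)); have b6 := enc2_lt (c (z-6))
  have b7 := enc2_lt (c (z-7)); have b8 := enc2_lt (c (z-8)); have b9 := enc2_lt (c (z-9))
  have b10 := enc2_lt (c (z-10))
  unfold stKey
  omega

lemma stKey_shift (c : ℤ → ℕ) (z : ℤ) :
    stKey c (z+1) = shf (enc1 (c z)) (stKey c z) := by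
  unfold shf
  rw [(stKey_digits c z).2.2.2.2.1, cond_enc1]
  have b1 := enc1_lt (c (z-1)); have b2 := enc1_lt (c (z-2)); have b3 := enc1_lt (c (z-3))
  have b4 := enc1_lt (c (z-4)); have b5 := enc1_lt (c (z-5)); have b6 := enc2_lt (c (z-6))
  have b7 := enc2_lt (c (z-7)); have b8 := enc2_lt (c (z-8)); have b9 := enc2_lt (c (z-9))
  have b10 := enc2_lt (c (z-10)); have b0 := enc1_lt (c z); have b5' := enc2_lt (c (z-5))
  unfold stKey
  rw [show z+1-1 = z by ring, show z+1-2 = z-1 by ring, show z+1-3 = z-2 by ring,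
      show z+1-4 = z-3 by ring, show z+1-5 = z-4 by ring, show z+1-6 = z-5 by ring,
      show z+1-7 = z-6 by ring, show z+1-8 = z-7 by ring, show z+1-9 = z-8 by ring,
      show z+1-10 = z-9 by ring]
  omega

variable {p : ℕ} {c : ℤ → ℕ}

lemma step (hp : IsPackingColoring (distGraph 2 5) p c) (z : ℤ) :
    7 * (if enc1 (c z) = 0 then 0 else 1) + phi (stKey c z) ≤ 4 + phi (stKey c (z+1)) := by
  obtain ⟨hlt, hd2, hd3, hd4, hd5, hd7, hd10⟩ := stKey_digits c z
  have hch := check1_true _ hlt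
  rw [check1] at hch
  simp only [Bool.and_eq_true, Bool.or_eq_true, Bool.not_eq_true', Nat.ble_eq] at hch
  obtain ⟨⟨⟨h15, h0⟩, h1'⟩, h2'⟩ := hch
  have hsh := stKey_shift c z
  by_cases hc1 : c z = 1
  · have he : enc1 (c z) = 1 := by simp [enc1, hc1]
    rw [he] at hsh
    rcases h1' with hf | hle
    · exfalso
      rw [ok1b, hd2, hd5] at hf
      simp only [Bool.and_eq_false_iff, Bool.not_eq_false', beq_iff_eq] at hf
      rcases hf with hf | hf
      · exact not_same_1 hp (u := z) (v := z - 2) (by omega) hc1 (enc1_eq_one hf) (by omega)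
      · exact not_same_1 hp (u := z) (v := z - 5) (by omega) hc1 (enc1_eq_one hf) (by omega)
    · rw [show (if enc1 (c z) = 0 then (0:ℕ) else 1) = 1 by simp [he], hsh]
      omega
  · by_cases hc2 : c z = 2
    · have he : enc1 (c z) = 2 := by simp [enc1, hc2]
      rw [he] at hsh
      rcases h2' with hf | hle
      · exfalso
        rw [ok2b, hd2, hd3, hd4, hd5, hd7, hd10] at hf
        simp only [Bool.and_eq_false_iff, Bool.not_eq_false', beq_iff_eq] at hf
        rcases hf with ((((hf | hf) | hf) | hf) | hf) | hf
        · exact not_same_2 hp (u := z) (v := z - 2) (by omega) hc2 (enc1_eq_two hf) (by omega)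
        · exact not_same_2 hp (u := z) (v := z - 3) (by omega) hc2 (enc1_eq_two hf) (by omega)
        · exact not_same_2 hp (u := z) (v := z - 4) (by omega) hc2 (enc1_eq_two hf) (by omega)
        · exact not_same_2 hp (u := z) (v := z - 5) (by omega) hc2 (enc1_eq_two hf) (by omega)
        · exact not_same_2 hp (u := z) (v := z - 7) (by omega) hc2 (enc2_eq_one hf) (by omega)
        · exact not_same_2 hp (u := z) (v := z - 10) (by omega) hc2 (enc2_eq_one hf) (by omega)
      · rw [show (if enc1 (c z) = 0 then (0:ℕ) else 1) = 1 by simp [he], hsh]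
        omega
    · have he : enc1 (c z) = 0 := by simp [enc1, hc1, hc2]
      rw [he] at hsh
      rw [show (if enc1 (c z) = 0 then (0:ℕ) else 1) = 0 by simp [he], hsh]
      omega

def cnt (c : ℤ → ℕ) : ℕ → ℕ
  | 0 => 0
  | n+1 => cnt c n + (if enc1 (c (n : ℤ)) = 0 then 0 else 1)

lemma chain (hp : IsPackingColoring (distGraph 2 5) p c) :
    ∀ n : ℕ, 7 * cnt c n + phi (stKey c 0) ≤ 4*n + phi (stKey c (n : ℤ)) := by
  intro n
  induction n with
  | zero => simp [cnt]
  | succ n ih =>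
    have hstep := step hp (n : ℤ)
    rw [cnt]
    rw [show ((n+1 : ℕ) : ℤ) = (n : ℤ) + 1 by push_cast; ring]
    omega

lemma cnt_le (hp : IsPackingColoring (distGraph 2 5) p c) (n : ℕ) :
    7 * cnt c n ≤ 4*n + 15 := by
  have h := chain hp n
  obtain ⟨hlt, -⟩ := stKey_digits c (n : ℤ)
  have hch := check1_true _ hlt
  rw [check1] at hch
  simp only [Bool.and_eq_true, Bool.or_eq_true, Bool.not_eq_true', Nat.ble_eq] at hch
  omega

end D25
namespace D25

variable {p : ℕ} {c : ℤ → ℕ}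

lemma icc_succ (n : ℕ) : Finset.Icc (0:ℤ) ((n:ℤ)) = insert ((n:ℤ)) (Finset.Icc (0:ℤ) ((n:ℤ) - 1)) := by
  ext a
  simp only [Finset.mem_Icc, Finset.mem_insert]
  omega

lemma cnt_eq (c : ℤ → ℕ) : ∀ n : ℕ,
    ((Finset.Icc (0:ℤ) ((n:ℤ) - 1)).filter (fun z => c z = 1 ∨ c z = 2)).card = cnt c n := by
  intro n
  induction n with
  | zero =>
    rw [show ((0:ℕ):ℤ) - 1 = -1 by norm_num, Finset.Icc_eq_empty (by norm_num)]
    simp [cnt]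
  | succ n ih =>
    rw [cnt, show ((n+1 : ℕ) : ℤ) - 1 = (n:ℤ) by push_cast; ring, icc_succ n,
        Finset.filter_insert]
    have hnotmem : (n:ℤ) ∉ (Finset.Icc (0:ℤ) ((n:ℤ) - 1)).filter (fun z => c z = 1 ∨ c z = 2) := by
      simp only [Finset.mem_filter, Finset.mem_Icc]
      omega
    by_cases hcz : c ((n:ℤ)) = 1 ∨ c ((n:ℤ)) = 2
    · rw [if_pos hcz, Finset.card_insert_of_notMem hnotmem, ih]
      have : (if enc1 (c ((n:ℤ))) = 0 then 0 else 1) = 1 := by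
        rcases hcz with h | h <;> simp [enc1, h]
      omega
    · rw [if_neg hcz]
      rw [ih]
      have : (if enc1 (c ((n:ℤ))) = 0 then 0 else 1) = 0 := by
        push_neg at hcz
        simp [enc1, hcz.1, hcz.2]
      omega

lemma count12 (hp : IsPackingColoring (distGraph 2 5) p c) :
    ((Finset.Icc (0:ℤ) 461).filter (fun z => c z = 1 ∨ c z = 2)).card ≤ 266 := by
  have h1 := cnt_eq c 462
  have h2 := cnt_le hp 462
  rw [show ((462:ℕ):ℤ) - 1 = 461 by norm_num] at h1
  omega

lemma block_count (hp : IsPackingColoring (distGraph 2 5) p c) (k g N : ℕ) (hg : 0 < g)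
    (hk : 3 ≤ k) (hgap : g = 5*k - 4) (hN : 461 < N * g) :
    ((Finset.Icc (0:ℤ) 461).filter (fun z => c z = k)).card ≤ N := by
  classical
  have hmaps : ∀ z ∈ (Finset.Icc (0:ℤ) 461).filter (fun z => c z = k),
      (fun z : ℤ => z.toNat / g) z ∈ Finset.range N := by
    intro z hz
    simp only [Finset.mem_filter, Finset.mem_Icc] at hz
    simp only [Finset.mem_range]
    have : z.toNat ≤ 461 := by omega
    calc z.toNat / g ≤ 461 / g := Nat.div_le_div_right this
      _ < N := by
        rw [Nat.div_lt_iff_lt_mul hg]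
        omega
  have hfib : ∀ a ∈ Finset.range N,
      (((Finset.Icc (0:ℤ) 461).filter (fun z => c z = k)).filter
        (fun x => (fun z : ℤ => z.toNat / g) x = a)).card ≤ 1 := by
    intro a _
    rw [Finset.card_le_one]
    intro u hu v hv
    simp only [Finset.mem_filter, Finset.mem_Icc] at hu hv
    by_contra hne
    have hgap1 : 5*k - 4 ≤ (v - u).natAbs := gap_k hp hk hne hu.1.2 hv.1.2
    have hq : u.toNat / g = v.toNat / g := by rw [hu.2, hv.2]
    have e1 := Nat.div_add_mod u.toNat g
    rw [hq] at e1
    have e2 := Nat.div_add_mod v.toNat g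
    have m1 : u.toNat % g < g := Nat.mod_lt _ hg
    have m2 : v.toNat % g < g := Nat.mod_lt _ hg
    omega
  have := Finset.card_le_mul_card_image_of_maps_to hmaps 1 hfib
  simpa using this

lemma main (hp : IsPackingColoring (distGraph 2 5) p c) (hP : p ≤ 13) : False := by
  classical
  set W := Finset.Icc (0:ℤ) 461 with hW
  have hsub : W ⊆ ((((((((((((W.filter (fun z => c z = 1 ∨ c z = 2)) ∪ (W.filter (fun z => c z = 3))) ∪ (W.filter (fun z => c z = 4))) ∪ (W.filter (fun z => c z = 5))) ∪ (W.filter (fun z => c z = 6))) ∪ (W.filter (fun z => c z = 7))) ∪ (W.filter (fun z => c z = 8))) ∪ (W.filter (fun z => c z = 9))) ∪ (W.filter (fun z => c z = 10))) ∪ (W.filter (fun z => c z = 11))) ∪ (W.filter (fun z => c z = 12))) ∪ (W.filter (fun z => c z = 13))) := by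
    intro z hz
    have hb := hp.1 z
    have hcase : c z = 1 ∨ c z = 2 ∨ c z = 3 ∨ c z = 4 ∨ c z = 5 ∨ c z = 6 ∨ c z = 7 ∨
        c z = 8 ∨ c z = 9 ∨ c z = 10 ∨ c z = 11 ∨ c z = 12 ∨ c z = 13 := by omega
    simp only [Finset.mem_union, Finset.mem_filter]
    rcases hcase with h|h|h|h|h|h|h|h|h|h|h|h|h <;> simp [hz, h]
  have h461 : W.card = 462 := by rw [hW, Int.card_Icc]; rfl
  have hb12 : (W.filter (fun z => c z = 1 ∨ c z = 2)).card ≤ 266 := count12 hp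
  have hb3 : (W.filter (fun z => c z = 3)).card ≤ 42 := block_count hp 3 11 42 (by norm_num) (by norm_num) (by norm_num) (by norm_num)
  have hb4 : (W.filter (fun z => c z = 4)).card ≤ 29 := block_count hp 4 16 29 (by norm_num) (by norm_num) (by norm_num) (by norm_num)
  have hb5 : (W.filter (fun z => c z = 5)).card ≤ 22 := block_count hp 5 21 22 (by norm_num) (by norm_num) (by norm_num) (by norm_num)
  have hb6 : (W.filter (fun z => c z = 6)).card ≤ 18 := block_count hp 6 26 18 (by norm_num) (by norm_num) (by norm_num) (by norm_num)
  have hb7 : (W.filter (fun z => c z = 7)).card ≤ 15 := block_count hp 7 31 15 (by norm_num) (by norm_num) (by norm_num) (by norm_num)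
  have hb8 : (W.filter (fun z => c z = 8)).card ≤ 13 := block_count hp 8 36 13 (by norm_num) (by norm_num) (by norm_num) (by norm_num)
  have hb9 : (W.filter (fun z => c z = 9)).card ≤ 12 := block_count hp 9 41 12 (by norm_num) (by norm_num) (by norm_num) (by norm_num)
  have hb10 : (W.filter (fun z => c z = 10)).card ≤ 11 := block_count hp 10 46 11 (by norm_num) (by norm_num) (by norm_num) (by norm_num)
  have hb11 : (W.filter (fun z => c z = 11)).card ≤ 10 := block_count hp 11 51 10 (by norm_num) (by norm_num) (by norm_num) (by norm_num)
  have hb12 : (W.filter (fun z => c z = 12)).card ≤ 9 := block_count hp 12 56 9 (by norm_num) (by norm_num) (by norm_num) (by norm_num)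
  have hb13 : (W.filter (fun z => c z = 13)).card ≤ 8 := block_count hp 13 61 8 (by norm_num) (by norm_num) (by norm_num) (by norm_num)
  have hu3 : ((W.filter (fun z => c z = 1 ∨ c z = 2)) ∪ (W.filter (fun z => c z = 3))).card ≤ 308 := le_trans (Finset.card_union_le _ _) (by omega)
  have hu4 : (((W.filter (fun z => c z = 1 ∨ c z = 2)) ∪ (W.filter (fun z => c z = 3))) ∪ (W.filter (fun z => c z = 4))).card ≤ 337 := le_trans (Finset.card_union_le _ _) (by omega)
  have hu5 : ((((W.filter (fun z => c z = 1 ∨ c z = 2)) ∪ (W.filter (fun z => c z = 3))) ∪ (W.filter (fun z => c z = 4))) ∪ (W.filter (fun z => c z = 5))).card ≤ 359 := le_trans (Finset.card_union_le _ _) (by omega)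
  have hu6 : (((((W.filter (fun z => c z = 1 ∨ c z = 2)) ∪ (W.filter (fun z => c z = 3))) ∪ (W.filter (fun z => c z = 4))) ∪ (W.filter (fun z => c z = 5))) ∪ (W.filter (fun z => c z = 6))).card ≤ 377 := le_trans (Finset.card_union_le _ _) (by omega)
  have hu7 : ((((((W.filter (fun z => c z = 1 ∨ c z = 2)) ∪ (W.filter (fun z => c z = 3))) ∪ (W.filter (fun z => c z = 4))) ∪ (W.filter (fun z => c z = 5))) ∪ (W.filter (fun z => c z = 6))) ∪ (W.filter (fun z => c z = 7))).card ≤ 392 := le_trans (Finset.card_union_le _ _) (by omega)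
  have hu8 : (((((((W.filter (fun z => c z = 1 ∨ c z = 2)) ∪ (W.filter (fun z => c z = 3))) ∪ (W.filter (fun z => c z = 4))) ∪ (W.filter (fun z => c z = 5))) ∪ (W.filter (fun z => c z = 6))) ∪ (W.filter (fun z => c z = 7))) ∪ (W.filter (fun z => c z = 8))).card ≤ 405 := le_trans (Finset.card_union_le _ _) (by omega)
  have hu9 : ((((((((W.filter (fun z => c z = 1 ∨ c z = 2)) ∪ (W.filter (fun z => c z = 3))) ∪ (W.filter (fun z => c z = 4))) ∪ (W.filter (fun z => c z = 5))) ∪ (W.filter (fun z => c z = 6))) ∪ (W.filter (fun z => c z = 7))) ∪ (W.filter (fun z => c z = 8))) ∪ (W.filter (fun z => c z = 9))).card ≤ 417 := le_trans (Finset.card_union_le _ _) (by omega)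
  have hu10 : (((((((((W.filter (fun z => c z = 1 ∨ c z = 2)) ∪ (W.filter (fun z => c z = 3))) ∪ (W.filter (fun z => c z = 4))) ∪ (W.filter (fun z => c z = 5))) ∪ (W.filter (fun z => c z = 6))) ∪ (W.filter (fun z => c z = 7))) ∪ (W.filter (fun z => c z = 8))) ∪ (W.filter (fun z => c z = 9))) ∪ (W.filter (fun z => c z = 10))).card ≤ 428 := le_trans (Finset.card_union_le _ _) (by omega)
  have hu11 : ((((((((((W.filter (fun z => c z = 1 ∨ c z = 2)) ∪ (W.filter (fun z => c z = 3))) ∪ (W.filter (fun z => c z = 4))) ∪ (W.filter (fun z => c z = 5))) ∪ (W.filter (fun z => c z = 6))) ∪ (W.filter (fun z => c z = 7))) ∪ (W.filter (fun z => c z = 8))) ∪ (W.filter (fun z => c z = 9))) ∪ (W.filter (fun z => c z = 10))) ∪ (W.filter (fun z => c z = 11))).card ≤ 438 := le_trans (Finset.card_union_le _ _) (by omega)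
  have hu12 : (((((((((((W.filter (fun z => c z = 1 ∨ c z = 2)) ∪ (W.filter (fun z => c z = 3))) ∪ (W.filter (fun z => c z = 4))) ∪ (W.filter (fun z => c z = 5))) ∪ (W.filter (fun z => c z = 6))) ∪ (W.filter (fun z => c z = 7))) ∪ (W.filter (fun z => c z = 8))) ∪ (W.filter (fun z => c z = 9))) ∪ (W.filter (fun z => c z = 10))) ∪ (W.filter (fun z => c z = 11))) ∪ (W.filter (fun z => c z = 12))).card ≤ 447 := le_trans (Finset.card_union_le _ _) (by omega)
  have hu13 : ((((((((((((W.filter (fun z => c z = 1 ∨ c z = 2)) ∪ (W.filter (fun z => c z = 3))) ∪ (W.filter (fun z => c z = 4))) ∪ (W.filter (fun z => c z = 5))) ∪ (W.filter (fun z => c z = 6))) ∪ (W.filter (fun z => c z = 7))) ∪ (W.filter (fun z => c z = 8))) ∪ (W.filter (fun z => c z = 9))) ∪ (W.filter (fun z => c z = 10))) ∪ (W.filter (fun z => c z = 11))) ∪ (W.filter (fun z => c z = 12))) ∪ (W.filter (fun z => c z = 13))).card ≤ 455 := le_trans (Finset.card_union_le _ _) (by omega)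
  have hfin := Finset.card_le_card hsub
  omega

end D25


theorem packing_chromatic_D25 : 14 ≤ packingChromaticNumber (distGraph 2 5) := by
  apply le_sInf
  rintro q ⟨p, rfl, c, hp⟩
  by_contra hlt
  push_neg at hlt
  have hp13 : p ≤ 13 := by
    have h14 : (p : ℕ∞) < ((14 : ℕ) : ℕ∞) := by exact_mod_cast hlt
    have : p < 14 := by exact_mod_cast h14
    omega
  exact D25.main hp hp13
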